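/- Let X be a set and let S1, S2 be sets of subsets of X with var(S1) ∩ var(S2) = ∅. Then (S1* ⊎ S2) ∩ (S1 ⊎ S2*) = S1 ⊎ S2. -/
import Mathlib


namespace SharingPaper

/-- `var(S) = ∪ {G | G ∈ S}`. -/
def varS {α : Type*} (S : Set (Set α)) : Set α := ⋃ G ∈ S, G

/-- Closure `S*`: the least superset of `S` closed under binary unions. -/
def closure {α : Type*} (S : Set (Set α)) : Set (Set α) :=
  ⋂₀ {S' | S ⊆ S' ∧ ∀ G1 ∈ S', ∀ G2 ∈ S', G1 ∪ G2 ∈ S'}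

/-- Pairwise union `S1 ⊎ S2`. -/
def pairUnion {α : Type*} (S1 S2 : Set (Set α)) : Set (Set α) :=
  {G | ∃ G1 ∈ S1, ∃ G2 ∈ S2, G = G1 ∪ G2}

/-- `S^{*F}`: the least superset `S'` of `S` such that `G1 ∪ G2 ∈ S'` whenever
`G1, G2 ∈ S'` and `G1 ∩ G2 ∩ F = ∅`. -/
def closureF {α : Type*} (Fv : Set α) (S : Set (Set α)) : Set (Set α) :=
  ⋂₀ {S' | S ⊆ S' ∧ ∀ G1 ∈ S', ∀ G2 ∈ S', G1 ∩ G2 ∩ Fv = ∅ → G1 ∪ G2 ∈ S'}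

/-- `S1 ⊎_F S2`. -/
def pairUnionF {α : Type*} (Fv : Set α) (S1 S2 : Set (Set α)) : Set (Set α) :=
  {G | ∃ G1 ∈ S1, ∃ G2 ∈ S2, (G1 ≠ G2 → G1 ∩ G2 ∩ Fv = ∅) ∧ G = G1 ∪ G2}

/-- The Filé decomposition `K_F(S)`. -/
def KF {α : Type*} (Fv : Set α) (S : Set (Set α)) : Set (Set (Set α)) :=
  {B | B ⊆ S ∧ Fv ⊆ varS B ∧
    ∀ G1 ∈ B, ∀ G2 ∈ B, G1 ≠ G2 → G1 ∩ G2 ∩ Fv = ∅}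

lemma subset_closure' {α : Type*} (S : Set (Set α)) : S ⊆ closure S := by
  intro G hG S' hS'
  exact hS'.1 hG

lemma closure_subset_var {α : Type*} {S : Set (Set α)} {G : Set α}
    (hG : G ∈ closure S) : G ⊆ varS S := by
  refine hG {H | H ⊆ varS S} ⟨?_, ?_⟩
  · intro H hH x hx; exact Set.mem_biUnion hH hx
  · intro G1 h1 G2 h2; exact Set.union_subset h1 h2

/-- if `var(S1) ∩ var(S2) = ∅` then
`(S1* ⊎ S2) ∩ (S1 ⊎ S2*) = S1 ⊎ S2`. -/
theorem stmt8 {α : Type*} (S1 S2 : Set (Set α))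
    (h : varS S1 ∩ varS S2 = ∅) :
    pairUnion (closure S1) S2 ∩ pairUnion S1 (closure S2) = pairUnion S1 S2 := by
  ext G
  constructor
  · rintro ⟨⟨A, hA, B, hB, rfl⟩, C, hC, D, hD, hEq⟩
    have hAv : A ⊆ varS S1 := closure_subset_var hA
    have hCv : C ⊆ varS S1 := fun x hx => Set.mem_biUnion hC hx
    have hBv : B ⊆ varS S2 := fun x hx => Set.mem_biUnion hB hx
    have hDv : D ⊆ varS S2 := closure_subset_var hD
    have hAC : A = C := by
      apply Set.eq_of_subset_of_subset
      · intro x hx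
        have hx' : x ∈ C ∪ D := hEq ▸ (Or.inl hx : x ∈ A ∪ B)
        rcases hx' with hc | hd
        · exact hc
        · have : x ∈ varS S1 ∩ varS S2 := ⟨hAv hx, hDv hd⟩
          rw [h] at this; exact this.elim
      · intro x hx
        have hx' : x ∈ A ∪ B := hEq ▸ (Or.inl hx : x ∈ C ∪ D)
        rcases hx' with ha | hb
        · exact ha
        · have : x ∈ varS S1 ∩ varS S2 := ⟨hCv hx, hBv hb⟩
          rw [h] at this; exact this.elim
    exact ⟨C, hC, B, hB, by rw [← hAC]⟩
  · rintro ⟨A, hA, B, hB, rfl⟩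
    exact ⟨⟨A, subset_closure' S1 hA, B, hB, rfl⟩,
      A, hA, B, subset_closure' S2 hB, rfl⟩

end SharingPaper
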